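/- For a Gaussian density f(·, θ, v) with v > 0 and any nonnegative integer ℓ, the integral ∫_ℝ [∂^ℓ f/∂θ^ℓ (x, θ, v)]² / f(x, θ, v) dx is finite. -/

import Mathlib

open MeasureTheory

/-- The one-dimensional Gaussian density. -/
noncomputable def gaussf (x θ v : ℝ) : ℝ :=
  (Real.sqrt (2 * Real.pi * v))⁻¹ * Real.exp (-(x - θ) ^ 2 / (2 * v))

lemma pow_mul_exp_half_bound (n : ℕ) {b : ℝ} (hb : 0 < b) (y : ℝ) :
    |y| ^ n * Real.exp (-(b / 2) * y ^ 2) ≤ (n.factorial : ℝ) * (2 / b) ^ n + 1 := by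
  set s : ℝ := b / 2 * y ^ 2 with hs
  have hs0 : 0 ≤ s := by positivity
  have hE : 0 < Real.exp s := Real.exp_pos s
  have hexp : Real.exp (-(b / 2) * y ^ 2) = (Real.exp s)⁻¹ := by
    rw [← Real.exp_neg, hs]; ring_nf
  have hes : s ^ n / (n.factorial : ℝ) ≤ Real.exp s := by
    calc s ^ n / (n.factorial : ℝ) ≤ ∑ i ∈ Finset.range (n + 1), s ^ i / (i.factorial : ℝ) :=
          Finset.single_le_sum (f := fun i => s ^ i / (i.factorial : ℝ))
            (fun i _ => by positivity) (Finset.self_mem_range_succ n)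
      _ ≤ Real.exp s := Real.sum_le_exp_of_nonneg hs0 _
  have hfac : (0 : ℝ) < (n.factorial : ℝ) := by
    exact_mod_cast n.factorial_pos
  have h2 : s ^ n ≤ (n.factorial : ℝ) * Real.exp s := by
    rw [div_le_iff₀ hfac] at hes
    linarith [hes]
  rcases le_total (|y|) 1 with h | h
  · have h1 : |y| ^ n ≤ 1 := pow_le_one₀ (abs_nonneg y) h
    have h3 : Real.exp (-(b / 2) * y ^ 2) ≤ 1 := by
      rw [Real.exp_le_one_iff]
      nlinarith [sq_nonneg y]
    have h4 : (0 : ℝ) ≤ (n.factorial : ℝ) * (2 / b) ^ n := by positivity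
    nlinarith [Real.exp_pos (-(b / 2) * y ^ 2), pow_nonneg (abs_nonneg y) n]
  · have habs : |y| ≤ y ^ 2 := by nlinarith [abs_nonneg y, sq_abs y]
    have h1 : |y| ^ n ≤ (y ^ 2) ^ n := pow_le_pow_left₀ (abs_nonneg y) habs n
    have hsn : s ^ n = (b / 2) ^ n * (y ^ 2) ^ n := by rw [hs, mul_pow]
    have hbb : (2 / b) ^ n * (b / 2) ^ n = 1 := by
      rw [← mul_pow]
      field_simp
      simp
    have hpos : (0 : ℝ) ≤ (2 / b) ^ n := by positivity
    have h5 : (b / 2) ^ n * (y ^ 2) ^ n ≤ (n.factorial : ℝ) * Real.exp s := hsn ▸ h2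
    have h6 : (y ^ 2) ^ n ≤ (n.factorial : ℝ) * (2 / b) ^ n * Real.exp s := by
      calc (y ^ 2) ^ n = (2 / b) ^ n * ((b / 2) ^ n * (y ^ 2) ^ n) := by
            rw [← mul_assoc, hbb, one_mul]
        _ ≤ (2 / b) ^ n * ((n.factorial : ℝ) * Real.exp s) :=
            mul_le_mul_of_nonneg_left h5 hpos
        _ = (n.factorial : ℝ) * (2 / b) ^ n * Real.exp s := by ring
    have h7 : (y ^ 2) ^ n * (Real.exp s)⁻¹ ≤ (n.factorial : ℝ) * (2 / b) ^ n := by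
      rw [← div_eq_mul_inv, div_le_iff₀ hE]
      exact h6
    have h8 : |y| ^ n * (Real.exp s)⁻¹ ≤ (y ^ 2) ^ n * (Real.exp s)⁻¹ :=
      mul_le_mul_of_nonneg_right h1 (by positivity)
    rw [hexp]
    linarith

lemma pow_mul_gauss_integrable (n : ℕ) {b : ℝ} (hb : 0 < b) :
    Integrable (fun y : ℝ => y ^ n * Real.exp (-b * y ^ 2)) := by
  have hb2 : 0 < b / 2 := half_pos hb
  refine Integrable.mono' (g := fun y : ℝ =>
      ((n.factorial : ℝ) * (2 / b) ^ n + 1) * Real.exp (-(b / 2) * y ^ 2))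
    ((integrable_exp_neg_mul_sq hb2).const_mul _) ?_ ?_
  · exact ((continuous_pow n).mul
      (Real.continuous_exp.comp (by continuity))).aestronglyMeasurable
  · filter_upwards with y
    have hsplit : Real.exp (-b * y ^ 2)
        = Real.exp (-(b / 2) * y ^ 2) * Real.exp (-(b / 2) * y ^ 2) := by
      rw [← Real.exp_add]; ring_nf
    have hbd := pow_mul_exp_half_bound n hb y
    have hEpos : 0 < Real.exp (-(b / 2) * y ^ 2) := Real.exp_pos _
    rw [Real.norm_eq_abs, abs_mul, abs_pow, Real.abs_exp, hsplit, ← mul_assoc]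
    exact mul_le_mul_of_nonneg_right hbd hEpos.le

lemma poly_mul_gauss_integrable (q : Polynomial ℝ) {b : ℝ} (hb : 0 < b) :
    Integrable (fun y : ℝ => q.eval y * Real.exp (-b * y ^ 2)) := by
  have : (fun y : ℝ => q.eval y * Real.exp (-b * y ^ 2))
      = fun y : ℝ => ∑ i ∈ Finset.range (q.natDegree + 1),
        q.coeff i * (y ^ i * Real.exp (-b * y ^ 2)) := by
    funext y
    rw [Polynomial.eval_eq_sum_range, Finset.sum_mul]
    simp [mul_assoc]
  rw [this]
  exact integrable_finset_sum _ fun i _ => ((pow_mul_gauss_integrable i hb).const_mul _)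

lemma gauss_deriv_form (v : ℝ) (hv : 0 < v) (ℓ : ℕ) :
    ∃ p : Polynomial ℝ, ∀ (x θ' : ℝ),
      iteratedDeriv ℓ (fun θ' => gaussf x θ' v) θ' = p.eval (x - θ') * gaussf x θ' v := by
  induction ℓ with
  | zero => exact ⟨1, fun x θ' => by simp [iteratedDeriv_zero]⟩
  | succ n ih =>
    obtain ⟨p, hp⟩ := ih
    refine ⟨Polynomial.C v⁻¹ * Polynomial.X * p - p.derivative, fun x θ' => ?_⟩
    rw [iteratedDeriv_succ]
    have hfun : iteratedDeriv n (fun θ' => gaussf x θ' v)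
        = fun θ' => p.eval (x - θ') * gaussf x θ' v := funext (hp x)
    rw [hfun]
    have hu : HasDerivAt (fun θ' : ℝ => x - θ') (-1) θ' := by
      simpa using (hasDerivAt_id θ').const_sub x
    have hpoly : HasDerivAt (fun θ' : ℝ => p.eval (x - θ'))
        (p.derivative.eval (x - θ') * (-1)) θ' :=
      (p.hasDerivAt (x - θ')).comp θ' hu
    have hin : HasDerivAt (fun θ' : ℝ => -(x - θ') ^ 2 / (2 * v))
        (-(2 * (x - θ') ^ 1 * (-1)) / (2 * v)) θ' :=
      ((hu.pow 2).neg).div_const (2 * v)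
    have hexp : HasDerivAt (fun θ' : ℝ => Real.exp (-(x - θ') ^ 2 / (2 * v)))
        (Real.exp (-(x - θ') ^ 2 / (2 * v)) * (-(2 * (x - θ') ^ 1 * (-1)) / (2 * v))) θ' :=
      hin.exp
    have hg : HasDerivAt (fun θ' : ℝ => gaussf x θ' v)
        ((Real.sqrt (2 * Real.pi * v))⁻¹ *
          (Real.exp (-(x - θ') ^ 2 / (2 * v)) * (-(2 * (x - θ') ^ 1 * (-1)) / (2 * v)))) θ' :=
      hexp.const_mul _
    have hmul := hpoly.mul hg
    change deriv ((fun θ' => Polynomial.eval (x - θ') p) * fun θ' => gaussf x θ' v) θ' = _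
    rw [hmul.deriv]
    unfold gaussf
    simp only [Polynomial.eval_sub, Polynomial.eval_mul, Polynomial.eval_C, Polynomial.eval_X]
    field_simp
    ring

/-- For a Gaussian density `f(·, θ, v)` with `v > 0` and any `ℓ ≥ 0`, the integral
`∫ [∂^ℓ f/∂θ^ℓ (x, θ, v)]² / f(x, θ, v) dx` is finite. -/
theorem gaussian_deriv_sq_div_integrable (θ v : ℝ) (hv : 0 < v) (ℓ : ℕ) :
    Integrable (fun x : ℝ =>
      (iteratedDeriv ℓ (fun θ' => gaussf x θ' v) θ) ^ 2 / gaussf x θ v) := by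
  obtain ⟨p, hp⟩ := gauss_deriv_form v hv ℓ
  have hgpos : ∀ x, 0 < gaussf x θ v := fun x => by
    unfold gaussf
    positivity
  have hb : 0 < (2 * v)⁻¹ := by positivity
  have key : (fun x : ℝ =>
        (iteratedDeriv ℓ (fun θ' => gaussf x θ' v) θ) ^ 2 / gaussf x θ v)
      = fun x : ℝ => (Real.sqrt (2 * Real.pi * v))⁻¹ *
          ((p ^ 2).eval (x - θ) * Real.exp (-(2 * v)⁻¹ * (x - θ) ^ 2)) := by
    funext x
    have hg := hgpos x
    rw [hp x θ, mul_pow, pow_two (gaussf x θ v), ← mul_assoc, mul_div_assoc,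
      div_self hg.ne', mul_one]
    unfold gaussf
    rw [Polynomial.eval_pow]
    have h1 : -(x - θ) ^ 2 / (2 * v) = -(2 * v)⁻¹ * (x - θ) ^ 2 := by
      field_simp
    rw [h1]
    ring
  rw [key]
  exact ((poly_mul_gauss_integrable (p ^ 2) hb).comp_sub_right θ).const_mul _
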